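/- There is no 6-by-6 real matrix M such that det(M[X]) = 1 for X in the family 𝓠₆ and det(M[X]) = 0 for all other subsets X ⊆ {1,…,6}, where 𝓠₆ consists of: ∅; all singletons; all pairs {i, i+2} (mod 6) and the three pairs {i, i+3} for i = 1,2,3; all triples {i, i+1, i+2} (mod 6) together with {1,3,5} and {2,4,6}; and all 4-element subsets of {1,…,6} except the three sets {1,…,6} \ {i, i+3} for i = 1,2,3. -/

import Mathlib

open Matrix

/-- The principal submatrix of `M` on the index set `I` (with `det (psub M ∅) = 1`). -/
def psub {m : Type*} {K : Type*} (M : Matrix m m K) (I : Finset m) :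
    Matrix I I K := fun i j => M i.1 j.1

/-- The quasi-trees of the bouquet `ℂ₆`: `∅`; all singletons; all pairs `{i, i+2}` and
`{i, i+3}`; all consecutive triples together with `{1,3,5}` and `{2,4,6}`; and all
4-element subsets except the complements of the pairs `{i, i+3}` (indices mod 6). -/
def Q6 : Set (Finset (Fin 6)) :=
  {X | X = ∅ ∨ (∃ i, X = {i}) ∨ (∃ i, X = {i, i + 2}) ∨ (∃ i, X = {i, i + 3}) ∨
    (∃ i, X = {i, i + 1, i + 2}) ∨ X = {0, 2, 4} ∨ X = {1, 3, 5} ∨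
    (X.card = 4 ∧ ¬ ∃ i, X = Finset.univ \ {i, i + 3})}

lemma det_psub_eq {n : ℕ} (M : Matrix (Fin 6) (Fin 6) ℝ) (f : Fin n → Fin 6)
    (hf : Function.Injective f) :
    (psub M (Finset.univ.image f)).det = (M.submatrix f f).det := by
  have hb : Function.Bijective
      (fun k : Fin n => (⟨f k, by simp⟩ : (Finset.univ.image f : Finset (Fin 6)))) := by
    rw [Fintype.bijective_iff_injective_and_card]
    constructor
    · intro a b hab
      exact hf (congrArg Subtype.val hab)
    · rw [Fintype.card_coe, Finset.card_image_of_injective _ hf]; simp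
  rw [← Matrix.det_submatrix_equiv_self (Equiv.ofBijective _ hb)]
  rfl

/-- no 6×6 real matrix detects the quasi-trees of `ℂ₆`. -/
theorem stmt16 :
    ¬ ∃ M : Matrix (Fin 6) (Fin 6) ℝ, ∀ X : Finset (Fin 6),
        (X ∈ Q6 → (psub M X).det = 1) ∧ (X ∉ Q6 → (psub M X).det = 0) := by
  rintro ⟨M, h⟩
  -- diagonal entries are 1
  have F1 : ∀ j : Fin 6, M j j = 1 := by
    have hq : ∀ j : Fin 6, ({j} : Finset (Fin 6)) ∈ Q6 := by unfold Q6; decide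
    have himg : ∀ j : Fin 6, ({j} : Finset (Fin 6)) = Finset.univ.image ![j] := by decide
    intro j
    have hinj : Function.Injective ![j] := fun a b _ => Subsingleton.elim a b
    have hd := (h _).1 (hq j)
    rw [himg j, det_psub_eq M _ hinj] at hd
    rw [Matrix.det_fin_one] at hd
    simpa using hd
  -- adjacent products are 1
  have F2 : ∀ i : Fin 6, M i (i+1) * M (i+1) i = 1 := by
    have hq : ∀ i : Fin 6, ({i, i+1} : Finset (Fin 6)) ∉ Q6 := by unfold Q6; decide
    have himg : ∀ i : Fin 6, ({i, i+1} : Finset (Fin 6)) = Finset.univ.image ![i, i+1] := by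
      decide
    have hinj : ∀ i : Fin 6, Function.Injective ![i, (i+1:Fin 6)] := by decide
    intro i
    have hd := (h _).2 (hq i)
    rw [himg i, det_psub_eq M _ (hinj i)] at hd
    rw [Matrix.det_fin_two] at hd; simp [F1] at hd
    linarith
  -- distance-2 products are 0
  have F3 : ∀ i : Fin 6, M i (i+2) * M (i+2) i = 0 := by
    have hq : ∀ i : Fin 6, ({i, i+2} : Finset (Fin 6)) ∈ Q6 := by unfold Q6; decide
    have himg : ∀ i : Fin 6, ({i, i+2} : Finset (Fin 6)) = Finset.univ.image ![i, i+2] := by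
      decide
    have hinj : ∀ i : Fin 6, Function.Injective ![i, (i+2:Fin 6)] := by decide
    intro i
    have hd := (h _).1 (hq i)
    rw [himg i, det_psub_eq M _ (hinj i)] at hd
    rw [Matrix.det_fin_two] at hd; simp [F1] at hd
    rcases hd with h0 | h0 <;> simp [h0]
  -- distance-3 products are 0
  have F4 : ∀ i : Fin 6, M i (i+3) * M (i+3) i = 0 := by
    have hq : ∀ i : Fin 6, ({i, i+3} : Finset (Fin 6)) ∈ Q6 := by unfold Q6; decide
    have himg : ∀ i : Fin 6, ({i, i+3} : Finset (Fin 6)) = Finset.univ.image ![i, i+3] := by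
      decide
    have hinj : ∀ i : Fin 6, Function.Injective ![i, (i+3:Fin 6)] := by decide
    intro i
    have hd := (h _).1 (hq i)
    rw [himg i, det_psub_eq M _ (hinj i)] at hd
    rw [Matrix.det_fin_two] at hd; simp [F1] at hd
    rcases hd with h0 | h0 <;> simp [h0]
  -- determinants of consecutive triples are 1
  have hd3 : ∀ i : Fin 6, (M.submatrix ![i, i+1, i+2] ![i, i+1, i+2]).det = 1 := by
    have hq : ∀ i : Fin 6, ({i, i+1, i+2} : Finset (Fin 6)) ∈ Q6 := by unfold Q6; decide
    have himg : ∀ i : Fin 6, ({i, i+1, i+2} : Finset (Fin 6)) =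
        Finset.univ.image ![i, i+1, i+2] := by decide
    have hinj : ∀ i : Fin 6, Function.Injective ![i, (i+1:Fin 6), i+2] := by decide
    intro i
    have hd := (h _).1 (hq i)
    rwa [himg i, det_psub_eq M _ (hinj i)] at hd
  -- determinants of {i,i+1,i+3} are 0
  have hd6 : ∀ i : Fin 6, (M.submatrix ![i, i+1, i+3] ![i, i+1, i+3]).det = 0 := by
    have hq : ∀ i : Fin 6, ({i, i+1, i+3} : Finset (Fin 6)) ∉ Q6 := by unfold Q6; decide
    have himg : ∀ i : Fin 6, ({i, i+1, i+3} : Finset (Fin 6)) =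
        Finset.univ.image ![i, i+1, i+3] := by decide
    have hinj : ∀ i : Fin 6, Function.Injective ![i, (i+1:Fin 6), i+3] := by decide
    intro i
    have hd := (h _).2 (hq i)
    rwa [himg i, det_psub_eq M _ (hinj i)] at hd
  -- determinants of {i,i+2,i+3} are 0
  have hd7 : ∀ i : Fin 6, (M.submatrix ![i, i+2, i+3] ![i, i+2, i+3]).det = 0 := by
    have hq : ∀ i : Fin 6, ({i, i+2, i+3} : Finset (Fin 6)) ∉ Q6 := by unfold Q6; decide
    have himg : ∀ i : Fin 6, ({i, i+2, i+3} : Finset (Fin 6)) =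
        Finset.univ.image ![i, i+2, i+3] := by decide
    have hinj : ∀ i : Fin 6, Function.Injective ![i, (i+2:Fin 6), i+3] := by decide
    intro i
    have hd := (h _).2 (hq i)
    rwa [himg i, det_psub_eq M _ (hinj i)] at hd
  -- determinants of consecutive 4-sets are 1
  have hd8 : ∀ i : Fin 6, (M.submatrix ![i, i+1, i+2, i+3] ![i, i+1, i+2, i+3]).det = 1 := by
    have hq : ∀ i : Fin 6, ({i, i+1, i+2, i+3} : Finset (Fin 6)) ∈ Q6 := by unfold Q6; decide
    have himg : ∀ i : Fin 6, ({i, i+1, i+2, i+3} : Finset (Fin 6)) =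
        Finset.univ.image ![i, i+1, i+2, i+3] := by decide
    have hinj : ∀ i : Fin 6, Function.Injective ![i, (i+1:Fin 6), i+2, i+3] := by decide
    intro i
    have hd := (h _).1 (hq i)
    rwa [himg i, det_psub_eq M _ (hinj i)] at hd
  -- determinant of {0,2,4} is 1
  have hd9 : (M.submatrix ![0, 2, 4] ![0, 2, 4]).det = 1 := by
    have hq : ({0, 2, 4} : Finset (Fin 6)) ∈ Q6 := by unfold Q6; decide
    have himg : ({0, 2, 4} : Finset (Fin 6)) = Finset.univ.image ![0, 2, 4] := by decide
    have hinj : Function.Injective ![(0:Fin 6), 2, 4] := by decide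
    have hd := (h _).1 hq
    rwa [himg, det_psub_eq M _ hinj] at hd
  -- the key step: M i (i+2) ≠ 0 implies M (i+1) (i+3) ≠ 0
  have step : ∀ i : Fin 6, ¬ M i (i+2) = 0 → ¬ M (i+1) (i+1+2) = 0 := by
    intro i hB hA'
    have hA : M (i+1) (i+3) = 0 := by rwa [show i+1+2 = i+3 by rw [add_assoc]; rfl] at hA'
    have hc2 : M (i+2) i = 0 := (mul_eq_zero.1 (F3 i)).resolve_left hB
    have f2b : M (i+1) (i+2) * M (i+2) (i+1) = 1 := by
      have := F2 (i+1); rwa [show i+1+1 = i+2 by rw [add_assoc]; rfl] at this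
    have f2c : M (i+2) (i+3) * M (i+3) (i+2) = 1 := by
      have := F2 (i+2); rwa [show i+2+1 = i+3 by rw [add_assoc]; rfl] at this
    -- E1 from det of {i, i+1, i+2}
    have h3 := hd3 i
    rw [Matrix.det_fin_three] at h3; simp [F1, hc2] at h3
    have E1 : M i (i+2) * M (i+1) i * M (i+2) (i+1) = 2 := by
      linear_combination h3 + F2 i + f2b
    -- E2 from det of {i+1, i+2, i+3}
    have h3' := hd3 (i+1)
    rw [show i+1+1 = i+2 by rw [add_assoc]; rfl, show i+1+2 = i+3 by rw [add_assoc]; rfl] at h3'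
    rw [Matrix.det_fin_three] at h3'; simp [F1, hA] at h3'
    have E2 : M (i+1) (i+2) * M (i+2) (i+3) * M (i+3) (i+1) = 2 := by
      linear_combination h3' + f2b + f2c
    have ha'' : M (i+2) (i+3) ≠ 0 := by
      intro h0; rw [h0] at E2; simp at E2
    have hdne : M (i+3) (i+1) ≠ 0 := by
      intro h0; rw [h0] at E2; simp at E2
    have hbne : M (i+1) i ≠ 0 := by
      intro h0; have := F2 i; rw [h0, mul_zero] at this; norm_num at this
    -- M (i+3) i = 0 from det of {i, i+2, i+3}
    have h7 := hd7 i
    rw [Matrix.det_fin_three] at h7; simp [F1, hc2] at h7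
    have key1 : M i (i+2) * M (i+2) (i+3) * M (i+3) i = 0 := by
      linear_combination h7 + f2c + F4 i
    have he2 : M (i+3) i = 0 := by
      rcases mul_eq_zero.1 key1 with h0 | h0
      · rcases mul_eq_zero.1 h0 with h1 | h1
        · exact absurd h1 hB
        · exact absurd h1 ha''
      · exact h0
    -- M i (i+3) = 0 from det of {i, i+1, i+3}
    have h6 := hd6 i
    rw [Matrix.det_fin_three] at h6; simp [F1, hA, he2] at h6
    have key2 : M i (i+3) * M (i+1) i * M (i+3) (i+1) = 0 := by
      linear_combination h6 + F2 i
    have he : M i (i+3) = 0 := by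
      rcases mul_eq_zero.1 key2 with h0 | h0
      · rcases mul_eq_zero.1 h0 with h1 | h1
        · exact h1
        · exact absurd h1 hbne
      · exact absurd h0 hdne
    -- the 4×4 determinant now yields a contradiction
    have h8 := hd8 i
    rw [Matrix.det_succ_row_zero] at h8
    simp only [Fin.sum_univ_succ, Fin.sum_univ_zero, add_zero] at h8
    rw [Matrix.det_fin_three, Matrix.det_fin_three, Matrix.det_fin_three, Matrix.det_fin_three] at h8
    simp only [Matrix.submatrix_apply] at h8
    norm_num [Fin.succAbove, Fin.lt_def] at h8
    simp only [Matrix.cons_val, show Fin.castSucc (2 : Fin 3) = 2 from rfl] at h8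
    norm_num [Matrix.det_succ_row_zero, Fin.sum_univ_succ, Fin.succAbove, Fin.lt_def,
      F1, hc2, he2, he, hA] at h8
    have h9 : M (i+2) (i+3) * M (i+1) i * M i (i+2) * M (i+3) (i+1) = 2 := by
      linear_combination E1 + E2 - h8 - f2b - F2 i +
        (M (i+2) (i+3) * M (i+3) (i+2)) * (F2 i)
    have hbd : 2 * (M (i+2) (i+3) * M (i+3) (i+1)) = 2 * M (i+2) (i+1) := by
      linear_combination (M (i+2) (i+1)) * h9 -
        (M (i+2) (i+3) * M (i+3) (i+1)) * E1
    have hb'eq : M (i+2) (i+3) * M (i+3) (i+1) = M (i+2) (i+1) := by linarith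
    have hfin : M (i+1) (i+2) * M (i+2) (i+1) = 2 := by
      linear_combination E2 - M (i+1) (i+2) * hb'eq
    linarith [f2b, hfin]
  -- concrete instances of the step
  have s0 : ¬ M 0 2 = 0 → ¬ M 1 3 = 0 := by simpa using step 0
  have s1 : ¬ M 1 3 = 0 → ¬ M 2 4 = 0 := by simpa using step 1
  have s2 : ¬ M 2 4 = 0 → ¬ M 3 5 = 0 := by simpa using step 2
  have s3 : ¬ M 3 5 = 0 → ¬ M 4 0 = 0 := by simpa using step 3
  have s4 : ¬ M 4 0 = 0 → ¬ M 5 1 = 0 := by simpa using step 4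
  have s5 : ¬ M 5 1 = 0 → ¬ M 0 2 = 0 := by simpa using step 5
  have f30 : M 0 2 * M 2 0 = 0 := by simpa using F3 0
  have f32 : M 2 4 * M 4 2 = 0 := by simpa using F3 2
  have f34 : M 4 0 * M 0 4 = 0 := by simpa using F3 4
  by_cases hB0 : M 0 2 = 0
  · -- all "A" case: M 0 2 = M 2 4 = M 4 0 = 0
    have h24 : M 2 4 = 0 := by
      by_contra h24
      exact (s5 (s4 (s3 (s2 h24)))) hB0
    have h40 : M 4 0 = 0 := by
      by_contra h40
      exact (s5 (s4 h40)) hB0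
    -- the reverse entries are nonzero
    have t0 := hd3 0
    rw [Matrix.det_fin_three] at t0; simp [F1, hB0] at t0
    have g0 : M 0 1 * M 1 2 * M 2 0 = 2 := by
      have f2a : M 0 1 * M 1 0 = 1 := by simpa using F2 0
      have f2b : M 1 2 * M 2 1 = 1 := by simpa using F2 1
      linear_combination t0 + f2a + f2b
    have t2 := hd3 2
    rw [Matrix.det_fin_three] at t2; simp [F1, h24] at t2
    have g2 : M 2 3 * M 3 4 * M 4 2 = 2 := by
      have f2a : M 2 3 * M 3 2 = 1 := by simpa using F2 2
      have f2b : M 3 4 * M 4 3 = 1 := by simpa using F2 3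
      linear_combination t2 + f2a + f2b
    have t4 := hd3 4
    rw [Matrix.det_fin_three] at t4; simp [F1, h40] at t4
    have g4 : M 4 5 * M 5 0 * M 0 4 = 2 := by
      have f2a : M 4 5 * M 5 4 = 1 := by simpa using F2 4
      have f2b : M 5 0 * M 0 5 = 1 := by simpa using F2 5
      linear_combination t4 + f2a + f2b
    have n20 : M 2 0 ≠ 0 := by intro h0; rw [h0, mul_zero] at g0; norm_num at g0
    have n42 : M 4 2 ≠ 0 := by intro h0; rw [h0, mul_zero] at g2; norm_num at g2
    have n04 : M 0 4 ≠ 0 := by intro h0; rw [h0, mul_zero] at g4; norm_num at g4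
    have h9 := hd9
    rw [Matrix.det_fin_three] at h9; simp [F1, hB0, h24, h40] at h9
    rcases h9 with h0 | h0
    · rcases h0 with h1 | h1
      · exact n04 h1
      · exact n20 h1
    · exact n42 h0
  · -- all "B" case: M 0 2, M 2 4, M 4 0 all nonzero
    have hB2 : ¬ M 2 4 = 0 := s1 (s0 hB0)
    have hB4 : ¬ M 4 0 = 0 := s3 (s2 hB2)
    have h20 : M 2 0 = 0 := (mul_eq_zero.1 f30).resolve_left hB0
    have h42 : M 4 2 = 0 := (mul_eq_zero.1 f32).resolve_left hB2
    have h04 : M 0 4 = 0 := (mul_eq_zero.1 f34).resolve_left hB4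
    have h9 := hd9
    rw [Matrix.det_fin_three] at h9; simp [F1, h20, h42, h04] at h9
    rcases h9 with h0 | h0
    · rcases h0 with h1 | h1
      · exact hB0 h1
      · exact hB2 h1
    · exact hB4 h0
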